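/- arXiv:2206.06523 — 2 statements merged into one kernel-verified Lean document; each statement's English description precedes it below -/
import Mathlib

section
/- Let V, W : [0,T] → ℝ be differentiable functions satisfying V' = 2W·A and W' = (1-2V)·A for some continuous function A(t), with initial data satisfying W(0)² + V(0)² = V(0). Then W(t)² + V(t)² = V(t) for all t ∈ [0,T]. -/
open Set

/-- invariance of the relation `W² + V² = V` along the flow
`V' = 2W·A`, `W' = (1-2V)·A`. -/
theorem stmt_5 (T : ℝ) (hT : 0 < T) (V W A : ℝ → ℝ)
    (hA : ContinuousOn A (Icc 0 T))
    (hV : ∀ t ∈ Icc (0:ℝ) T, HasDerivAt V (2 * W t * A t) t)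
    (hW : ∀ t ∈ Icc (0:ℝ) T, HasDerivAt W ((1 - 2 * V t) * A t) t)
    (h0 : W 0 ^ 2 + V 0 ^ 2 = V 0) :
    ∀ t ∈ Icc (0:ℝ) T, W t ^ 2 + V t ^ 2 = V t := by
  set g : ℝ → ℝ := fun t => W t ^ 2 + V t ^ 2 - V t with hg
  have hderiv : ∀ t ∈ Icc (0:ℝ) T, HasDerivAt g 0 t := by
    intro t ht
    have h1 := ((hW t ht).pow 2).add ((hV t ht).pow 2) |>.sub (hV t ht)
    refine h1.congr_deriv ?_
    ring
  have hconst : ∀ t ∈ Icc (0:ℝ) T, g t = g 0 :=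
    constant_of_has_deriv_right_zero
      (fun t ht => (hderiv t ht).continuousAt.continuousWithinAt)
      (fun t ht => ((hderiv t (Ico_subset_Icc_self ht)).hasDerivWithinAt))
  intro t ht
  have := hconst t ht
  simp only [hg] at this
  nlinarith [this]
end

section
/- Let k(t,·) ∈ H¹(ℝ) with ‖k(t,·)‖_{H¹} = E₀ for all t, and define y(t,β) by y + ∫_{-∞}^y k_x²(t,z)dz = β. Then for fixed t, the map β ↦ k(t, y(t,β)) is Lipschitz continuous with constant 1: for β₁ < β₂, |k(t,y(t,β₂)) - k(t,y(t,β₁))| ≤ β₂ - β₁. -/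
open MeasureTheory Set Real

/-- with `y(β)` defined by `y + ∫_{-∞}^y k_x² dz = β` (at a fixed time,
`‖k‖_{H¹} = E₀`), the map `β ↦ k(y(β))` is Lipschitz with constant 1. -/
theorem stmt_11 (E₀ : ℝ) (k kx : ℝ → ℝ) (y : ℝ → ℝ)
    (hkd : ∀ x, HasDerivAt k (kx x) x)
    (hint : Integrable (fun z => kx z ^ 2) volume)
    (hnorm : Real.sqrt (∫ x : ℝ, (k x ^ 2 + kx x ^ 2)) = E₀)
    (hy : ∀ β : ℝ, y β + ∫ z in Iic (y β), kx z ^ 2 = β) :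
    ∀ β₁ β₂ : ℝ, β₁ < β₂ → |k (y β₂) - k (y β₁)| ≤ β₂ - β₁ := by
  intro β₁ β₂ hβ
  set a := y β₁ with ha
  set b := y β₂ with hb
  have hkxmeas : Measurable kx := by
    have : kx = deriv k := funext fun x => (hkd x).deriv.symm
    rw [this]; exact measurable_deriv k
  have hnonneg : ∀ z, 0 ≤ kx z ^ 2 := fun z => sq_nonneg _
  -- a ≤ b
  have hab : a ≤ b := by
    by_contra h
    push_neg at h
    have hIic : (∫ z in Iic b, kx z ^ 2) ≤ ∫ z in Iic a, kx z ^ 2 := by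
      apply setIntegral_mono_set hint.integrableOn
      · exact Filter.Eventually.of_forall hnonneg
      · exact Filter.Eventually.of_forall (fun x hx => le_trans hx h.le)
    have := hy β₁
    have := hy β₂
    linarith
  -- the key identity for β₂ - β₁
  have hdiff : β₂ - β₁ = (b - a) + ∫ x in a..b, kx x ^ 2 := by
    rw [← intervalIntegral.integral_Iic_sub_Iic hint.integrableOn hint.integrableOn]
    have h1 := hy β₁
    have h2 := hy β₂
    linarith
  -- interval integrability facts
  have hI2 : IntervalIntegrable (fun x => kx x ^ 2) volume a b := hint.intervalIntegrable
  have hones : IntervalIntegrable (fun x => 1 + kx x ^ 2) volume a b :=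
    intervalIntegrable_const.add hI2
  have hIabs : IntervalIntegrable (fun x => |kx x|) volume a b := by
    apply hones.mono_fun (hkxmeas.abs.aestronglyMeasurable.restrict)
    refine Filter.Eventually.of_forall fun x => ?_
    simp only [Real.norm_eq_abs, abs_abs]
    rcases le_or_gt (|kx x|) 1 with h | h
    · calc |kx x| ≤ 1 := h
        _ ≤ |1 + kx x ^ 2| := by rw [abs_of_nonneg (by positivity)]; nlinarith [sq_nonneg (kx x)]
    · calc |kx x| ≤ kx x ^ 2 := by nlinarith [abs_nonneg (kx x), sq_abs (kx x)]
        _ ≤ |1 + kx x ^ 2| := by rw [abs_of_nonneg (by positivity)]; linarith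
  have hIkx : IntervalIntegrable kx volume a b := by
    rw [intervalIntegrable_iff_integrableOn_Ioc_of_le hab]
    exact ((intervalIntegrable_iff_integrableOn_Ioc_of_le hab).mp hIabs).mono'
      hkxmeas.aestronglyMeasurable.restrict
      (Filter.Eventually.of_forall fun x => le_of_eq (Real.norm_eq_abs _))
  -- FTC
  have hftc : (∫ x in a..b, kx x) = k b - k a :=
    intervalIntegral.integral_eq_sub_of_hasDerivAt (fun x _ => hkd x) hIkx
  calc |k b - k a| = |∫ x in a..b, kx x| := by rw [hftc]
    _ ≤ ∫ x in a..b, |kx x| := intervalIntegral.abs_integral_le_integral_abs hab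
    _ ≤ ∫ x in a..b, (1 + kx x ^ 2) := by
        apply intervalIntegral.integral_mono_on hab hIabs hones
        intro x _
        rcases le_or_gt (|kx x|) 1 with h | h
        · nlinarith [sq_nonneg (kx x)]
        · nlinarith [abs_nonneg (kx x), sq_abs (kx x)]
    _ = (b - a) + ∫ x in a..b, kx x ^ 2 := by
        rw [intervalIntegral.integral_add intervalIntegrable_const hI2]
        simp [smul_eq_mul]
    _ = β₂ - β₁ := hdiff.symm
end
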